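/- Let R be a ring and A an R-module admitting an ordinal-indexed filtration (A_α)_{α≤λ} by submodules which is increasing, continuous at limit ordinals (A_β = ∪_{α<β} A_α for every limit ordinal β ≤ λ), with A_0 = 0, A_λ = A, and such that A_{α+1}/A_α is a countably generated projective R-module for every α with α+1 ≤ λ. Then for every ordinal γ ≤ λ the quotient A/A_γ is a projective R-module and A_γ is a direct summand of A. -/

import Mathlib

universe u v

/-- if an `R`-module `A` is a direct transfinite extension of countably
generated projective modules, then for every ordinal `γ ≤ λ` the quotient `A / A_γ` is
projective and `A_γ` is a direct summand of `A`. -/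
theorem stmt13 {R : Type u} [Ring R] {A : Type v} [AddCommGroup A] [Module R A]
    (lam : Ordinal) (F : Ordinal → Submodule R A)
    (hmono : ∀ α β, α ≤ β → β ≤ lam → F α ≤ F β)
    (h0 : F 0 = ⊥) (htop : F lam = ⊤)
    (hcont : ∀ β ≤ lam, Order.IsSuccLimit β → F β = ⨆ α < β, F α)
    (hproj : ∀ α, α + 1 ≤ lam →
      Module.Projective R (↥(F (α + 1)) ⧸ Submodule.comap (F (α + 1)).subtype (F α)))
    (hcg : ∀ α, α + 1 ≤ lam →
      ∃ s : Set (↥(F (α + 1)) ⧸ Submodule.comap (F (α + 1)).subtype (F α)),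
        s.Countable ∧ Submodule.span R s = ⊤) :
    ∀ γ ≤ lam, Module.Projective R (A ⧸ F γ) ∧ ∃ B : Submodule R A, IsCompl (F γ) B := by
  classical
  -- Step 1: choose a complement of `F α` inside `F (α+1)` for every `α` with `α+1 ≤ lam`.
  have key : ∀ α : Ordinal, ∃ C : Submodule R A, α + 1 ≤ lam →
      C ≤ F (α + 1) ∧ Disjoint (F α) C ∧ F α ⊔ C = F (α + 1) ∧
      Nonempty ((↥(F (α + 1)) ⧸ Submodule.comap (F (α + 1)).subtype (F α)) ≃ₗ[R] C) := by
    intro α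
    by_cases h : α + 1 ≤ lam
    · have hle : F α ≤ F (α + 1) := hmono α (α + 1) le_self_add h
      haveI := hproj α h
      set p := F (α + 1) with hp
      set K := Submodule.comap p.subtype (F α) with hK
      obtain ⟨σ, hσ⟩ := Module.projective_lifting_property K.mkQ LinearMap.id
        (Submodule.mkQ_surjective K)
      have hcompl : IsCompl K (LinearMap.range σ) := by
        constructor
        · rw [disjoint_iff, Submodule.eq_bot_iff]
          rintro x ⟨hxK, q', rfl⟩
          have h1 : K.mkQ (σ q') = q' := LinearMap.congr_fun hσ q'
          have h2 : K.mkQ (σ q') = 0 := (Submodule.Quotient.mk_eq_zero K).mpr hxK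
          rw [h1] at h2; rw [h2, map_zero]
        · rw [codisjoint_iff, eq_top_iff]
          intro x _
          have h1 : x - σ (K.mkQ x) ∈ K := by
            have hz : K.mkQ (x - σ (K.mkQ x)) = 0 := by
              have hs : K.mkQ (σ (K.mkQ x)) = K.mkQ x := LinearMap.congr_fun hσ (K.mkQ x)
              rw [map_sub, hs, sub_self]
            rwa [Submodule.mkQ_apply, Submodule.Quotient.mk_eq_zero] at hz
          simpa using Submodule.add_mem_sup h1 (LinearMap.mem_range_self σ (K.mkQ x))
      refine ⟨Submodule.map p.subtype (LinearMap.range σ), fun _ =>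
        ⟨Submodule.map_subtype_le _ _, ?_, ?_, ?_⟩⟩
      · rw [Submodule.disjoint_def]
        rintro x hxq ⟨y, hy, rfl⟩
        have hyK : y ∈ K := hxq
        have := Submodule.disjoint_def.mp hcompl.disjoint y hyK hy
        rw [this]; rfl
      · have h1 : Submodule.map p.subtype K ⊔ Submodule.map p.subtype (LinearMap.range σ)
            = Submodule.map p.subtype (K ⊔ LinearMap.range σ) := (Submodule.map_sup _ _ _).symm
        have h2 : K ⊔ LinearMap.range σ = ⊤ := hcompl.sup_eq_top
        have h3 : Submodule.map p.subtype K = F α := by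
          rw [hK, Submodule.map_comap_subtype, inf_eq_right.mpr hle]
        rw [← h3, h1, h2, Submodule.map_top, Submodule.range_subtype]
      · exact ⟨(Submodule.quotientEquivOfIsCompl K (LinearMap.range σ) hcompl).trans
          (p.equivSubtypeMap _)⟩
    · exact ⟨⊥, fun h' => absurd h' h⟩
  choose C' hC' using key
  -- basic consequences
  have hCle : ∀ α, α + 1 ≤ lam → C' α ≤ F (α + 1) := fun α h => (hC' α h).1
  have hCdis : ∀ α, α + 1 ≤ lam → Disjoint (F α) (C' α) := fun α h => (hC' α h).2.1
  have hCsup : ∀ α, α + 1 ≤ lam → F α ⊔ C' α = F (α + 1) := fun α h => (hC' α h).2.2.1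
  -- Step 2: `F β` is the sup of the chosen pieces below `β`.
  have hS : ∀ β ≤ lam, F β = ⨆ α, ⨆ _ : α < β, C' α := by
    intro β
    induction β using Ordinal.induction with
    | h β IH =>
      intro hβ
      rcases Ordinal.zero_or_succ_or_isSuccLimit β with h00 | ⟨δ, rfl⟩ | hlim
      · subst h00
        rw [h0]
        refine le_antisymm bot_le (iSup₂_le fun α hα => absurd hα (not_lt_zero (a := α)))
      · rw [← Ordinal.add_one_eq_succ] at *
        have hδ1 : δ + 1 ≤ lam := hβ
        have hδ : δ ≤ lam := le_trans le_self_add hδ1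
        have hIH : F δ = ⨆ α, ⨆ _ : α < δ, C' α :=
          IH δ (lt_of_lt_of_le (lt_add_one δ) le_rfl) hδ
        refine le_antisymm ?_ (iSup₂_le fun α hα => ?_)
        · rw [← hCsup δ hδ1]
          refine sup_le ?_ (le_iSup₂_of_le δ (lt_add_one δ) le_rfl)
          rw [hIH]
          exact iSup₂_le fun α hα =>
            le_iSup₂_of_le α (lt_of_lt_of_le hα le_self_add) le_rfl
        · have hα' : α + 1 ≤ δ + 1 := by
            rw [Ordinal.add_one_eq_succ, Ordinal.add_one_eq_succ, Order.succ_le_succ_iff]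
            exact Order.lt_succ_iff.mp (by rwa [Ordinal.add_one_eq_succ] at hα)
          exact le_trans (hCle α (le_trans hα' hδ1)) (hmono (α + 1) (δ + 1) hα' hδ1)
      · rw [hcont β hβ hlim]
        refine le_antisymm (iSup₂_le fun δ hδ => ?_) (iSup₂_le fun α hα => ?_)
        · rw [IH δ hδ (le_trans hδ.le hβ)]
          exact iSup₂_le fun α hα => le_iSup₂_of_le α (lt_trans hα hδ) le_rfl
        · have hα1 : α + 1 < β := by
            rw [Ordinal.add_one_eq_succ]; exact hlim.succ_lt hα
          refine le_iSup₂_of_le (α + 1) hα1 ?_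
          exact hCle α (le_trans hα1.le hβ)
  -- Step 3: the main construction.
  intro γ hγ
  set ι := {α : Ordinal // γ ≤ α ∧ α < lam} with hι
  have hι1 : ∀ i : ι, i.1 + 1 ≤ lam := fun i => by
    rw [Ordinal.add_one_eq_succ]; exact Order.succ_le_iff.mpr i.2.2
  set D : ι → Submodule R A := fun i => C' i.1 with hD
  -- the key cancellation lemma
  have key2 : ∀ f : Π₀ i : ι, D i, (f.sum fun _ xi => (xi : A)) ∈ F γ → f = 0 := by
    intro f hf
    by_contra hne
    have hsupp : f.support.Nonempty := by
      rw [Finset.nonempty_iff_ne_empty]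
      intro hemp
      exact hne (DFinsupp.support_eq_empty.mp hemp)
    set i := f.support.max' hsupp with hi
    have him : i ∈ f.support := f.support.max'_mem hsupp
    have hval : (f i : A) = (f.sum fun _ xi => (xi : A))
        - ∑ j ∈ f.support.erase i, (f j : A) := by
      rw [DFinsupp.sum, ← Finset.add_sum_erase _ _ him, add_sub_cancel_right]
    have hmem : (f i : A) ∈ F i.1 := by
      rw [hval]
      refine Submodule.sub_mem _ (hmono γ i.1 i.2.1 i.2.2.le hf) ?_
      refine Submodule.sum_mem _ fun j hj => ?_
      have hji : j < i := lt_of_le_of_ne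
        (f.support.le_max' j (Finset.mem_of_mem_erase hj)) (Finset.ne_of_mem_erase hj)
      have hji' : j.1 + 1 ≤ i.1 := by
        rw [Ordinal.add_one_eq_succ]
        exact Order.succ_le_iff.mpr (Subtype.coe_lt_coe.mpr hji)
      exact hmono (j.1 + 1) i.1 hji' i.2.2.le (hCle j.1 (hι1 j) (f j).2)
    have hz : (f i : A) = 0 :=
      Submodule.disjoint_def.mp (hCdis i.1 (hι1 i)) _ hmem (f i).2
    exact DFinsupp.mem_support_iff.mp him (Subtype.ext hz)
  set B : Submodule R A := ⨆ i : ι, D i with hB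
  have hcompl : IsCompl (F γ) B := by
    constructor
    · rw [Submodule.disjoint_def]
      intro x hxγ hxB
      rw [hB, Submodule.mem_iSup_iff_exists_dfinsupp'] at hxB
      obtain ⟨f, hfx⟩ := hxB
      have := key2 f (by rwa [hfx])
      rw [← hfx, this]; exact DFinsupp.sum_zero_index
    · rw [codisjoint_iff, eq_top_iff, ← htop, hS lam le_rfl]
      refine iSup₂_le fun α hα => ?_
      by_cases hgα : γ ≤ α
      · exact le_trans (le_iSup (fun i : ι => D i) ⟨α, hgα, hα⟩) le_sup_right
      · have hα1 : α + 1 ≤ γ := by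
          rw [Ordinal.add_one_eq_succ]
          exact Order.succ_le_iff.mpr (lt_of_not_ge hgα)
        exact le_trans (le_trans (hCle α (le_trans hα1 hγ))
          (hmono (α + 1) γ hα1 hγ)) le_sup_left
  refine ⟨?_, B, hcompl⟩
  -- projectivity of `A ⧸ F γ`
  haveI hDproj : ∀ i : ι, Module.Projective R (D i) := fun i => by
    obtain ⟨e⟩ := (hC' i.1 (hι1 i)).2.2.2
    haveI := hproj i.1 (hι1 i)
    exact Module.Projective.of_equiv e
  set φ : (Π₀ i : ι, D i) →ₗ[R] A := DFinsupp.lsum ℕ (fun i : ι => (D i).subtype) with hφ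
  have hφapp : ∀ f : Π₀ i : ι, D i, φ f = f.sum fun _ xi => (xi : A) := by
    intro f
    rw [hφ, DFinsupp.lsum_apply_apply, DFinsupp.sumAddHom_apply]
    rfl
  have hker : LinearMap.ker φ = ⊥ := by
    rw [Submodule.eq_bot_iff]
    intro f hfk
    refine key2 f ?_
    rw [← hφapp f, LinearMap.mem_ker.mp hfk]
    exact Submodule.zero_mem _
  have hinj : Function.Injective φ := LinearMap.ker_eq_bot.mp hker
  have hrange : LinearMap.range φ = B := (Submodule.iSup_eq_range_dfinsupp_lsum D).symm
  have e1 : (Π₀ i : ι, D i) ≃ₗ[R] B :=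
    (LinearEquiv.ofInjective φ hinj).trans (LinearEquiv.ofEq _ _ hrange)
  have e2 : (A ⧸ F γ) ≃ₗ[R] B := Submodule.quotientEquivOfIsCompl (F γ) B hcompl
  exact Module.Projective.of_equiv (e1.trans e2.symm)
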